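/- Let 0 < γ < C₃ and let C₂ be a real number with 2√(γC₃) − C₃ < C₂ < γ. Then f(y) = (C₂−γ)y + (C₃−C₂)y² − C₃y³ has exactly two zeros y₁ < y₂ in the open interval (0,1), and moreover f′(0) < 0, f′(y₁) > 0 and f′(y₂) < 0; that is, the disease-free state 0 and the upper endemic equilibrium y₂ are both linearly stable while y₁ is unstable (bistability in the backward-bifurcation regime). -/
import Mathlib

set_option maxHeartbeats 2000000


/-- In the backward-bifurcation regime `0 < γ < C₃` with
`2√(γC₃) − C₃ < C₂ < γ`, the cubic contagion model
`f(y) = (C₂−γ)y + (C₃−C₂)y² − C₃y³` has exactly two zeros `y₁ < y₂` in `(0,1)`,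
with `f′(0) < 0`, `f′(y₁) > 0` and `f′(y₂) < 0` (bistability between the
disease-free state and the upper endemic state). -/
theorem cubic_bistability (γ C₂ C₃ : ℝ) (hγ : 0 < γ) (hγC₃ : γ < C₃)
    (hlo : 2 * Real.sqrt (γ * C₃) - C₃ < C₂) (hhi : C₂ < γ) (f : ℝ → ℝ)
    (hf : ∀ y : ℝ, f y = (C₂ - γ) * y + (C₃ - C₂) * y ^ 2 - C₃ * y ^ 3) :
    ∃ y₁ y₂ : ℝ, y₁ ∈ Set.Ioo (0 : ℝ) 1 ∧ y₂ ∈ Set.Ioo (0 : ℝ) 1 ∧ y₁ < y₂ ∧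
      f y₁ = 0 ∧ f y₂ = 0 ∧
      (∀ y ∈ Set.Ioo (0 : ℝ) 1, f y = 0 → y = y₁ ∨ y = y₂) ∧
      deriv f 0 < 0 ∧ deriv f y₁ > 0 ∧ deriv f y₂ < 0 := by
  have hC₃ : 0 < C₃ := lt_trans hγ hγC₃
  have hγC₃pos : 0 ≤ γ * C₃ := le_of_lt (mul_pos hγ hC₃)
  have hsqrt : Real.sqrt (γ * C₃) ^ 2 = γ * C₃ := Real.sq_sqrt hγC₃pos
  have hsqrt0 : 0 ≤ Real.sqrt (γ * C₃) := Real.sqrt_nonneg _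
  have hsum : 2 * Real.sqrt (γ * C₃) < C₂ + C₃ := by linarith
  set D : ℝ := (C₂ + C₃) ^ 2 - 4 * γ * C₃ with hDdef
  have hD : 0 < D := by nlinarith [hsqrt, hsqrt0, hsum]
  set s : ℝ := Real.sqrt D with hsdef
  have hs0 : 0 < s := Real.sqrt_pos.mpr hD
  have hs2 : s ^ 2 = D := Real.sq_sqrt hD.le
  have hslt : s < C₃ - C₂ := by nlinarith [hs0, hs2]
  have hslt2 : s < C₃ + C₂ := by nlinarith [hs0, hs2]
  set y₁ : ℝ := (C₃ - C₂ - s) / (2 * C₃) with hy1def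
  set y₂ : ℝ := (C₃ - C₂ + s) / (2 * C₃) with hy2def
  have h2C₃ : (0:ℝ) < 2 * C₃ := by linarith
  have hy1pos : 0 < y₁ := div_pos (by linarith) h2C₃
  have hy2pos : 0 < y₂ := div_pos (by linarith) h2C₃
  have hy2lt1 : y₂ < 1 := by
    rw [hy2def, div_lt_one h2C₃]; linarith
  have hy1lty2 : y₁ < y₂ := by
    rw [hy1def, hy2def]
    exact div_lt_div_of_pos_right (by linarith) h2C₃
  have hy1lt1 : y₁ < 1 := lt_trans hy1lty2 hy2lt1
  -- factorization of the quadratic part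
  have hfac : ∀ y : ℝ, C₃ * y ^ 2 - (C₃ - C₂) * y + (γ - C₂)
      = C₃ * (y - y₁) * (y - y₂) := by
    intro y
    rw [hy1def, hy2def]
    field_simp
    ring_nf
    nlinarith [hs2]
  have hfq : ∀ y : ℝ, f y = -(y * (C₃ * (y - y₁) * (y - y₂))) := by
    intro y
    rw [hf y, ← hfac y]; ring
  have hfy1 : f y₁ = 0 := by rw [hfq]; ring
  have hfy2 : f y₂ = 0 := by rw [hfq]; ring
  -- derivative
  have hderiv : ∀ x : ℝ, deriv f x = (C₂ - γ) + (C₃ - C₂) * (2 * x) - C₃ * (3 * x ^ 2) := by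
    intro x
    have hfe : f = fun y => (C₂ - γ) * y + (C₃ - C₂) * y ^ 2 - C₃ * y ^ 3 := funext hf
    rw [hfe]
    have h : HasDerivAt (fun y : ℝ => (C₂ - γ) * y + (C₃ - C₂) * y ^ 2 - C₃ * y ^ 3)
        ((C₂ - γ) * 1 + (C₃ - C₂) * (2 * x ^ 1) - C₃ * (3 * x ^ 2)) x := by
      exact (((hasDerivAt_id x).const_mul _).add
        ((hasDerivAt_pow 2 x).const_mul _)).sub ((hasDerivAt_pow 3 x).const_mul _)
    simpa using h.deriv
  have hq1 : C₃ * y₁ ^ 2 - (C₃ - C₂) * y₁ + (γ - C₂) = 0 := by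
    rw [hfac]; ring
  have hq2 : C₃ * y₂ ^ 2 - (C₃ - C₂) * y₂ + (γ - C₂) = 0 := by
    rw [hfac]; ring
  refine ⟨y₁, y₂, ⟨hy1pos, hy1lt1⟩, ⟨hy2pos, hy2lt1⟩, hy1lty2, hfy1, hfy2, ?_, ?_, ?_, ?_⟩
  · intro y hy hfy
    rw [hfq y] at hfy
    have hy0 : y ≠ 0 := ne_of_gt hy.1
    have : (y - y₁) * (y - y₂) = 0 := by
      have h := hfy
      have : y * (C₃ * (y - y₁) * (y - y₂)) = 0 := by linarith
      rcases mul_eq_zero.mp this with h' | h'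
      · exact absurd h' hy0
      · rcases mul_eq_zero.mp h' with h'' | h''
        · rcases mul_eq_zero.mp h'' with h3 | h3
          · exact absurd h3 (ne_of_gt hC₃)
          · simp [h3]
        · simp [h'']
    rcases mul_eq_zero.mp this with h | h
    · left; linarith
    · right; linarith
  · rw [hderiv]; nlinarith
  · rw [hderiv]
    have hy1val : 2 * C₃ * y₁ = C₃ - C₂ - s := by
      rw [hy1def]; field_simp
    have key : 2 * C₃ * ((C₂ - γ) + (C₃ - C₂) * (2 * y₁) - C₃ * (3 * y₁ ^ 2))
        = s * (C₃ - C₂ - s) := by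
      linear_combination (2 * (C₃ - C₂) - (3/2) * (2 * C₃ * y₁ + (C₃ - C₂ - s))) * hy1val
        - (1/2) * hs2
    nlinarith [key, mul_pos hs0 (sub_pos.mpr hslt), h2C₃]
  · rw [hderiv]
    have hy2val : 2 * C₃ * y₂ = C₃ - C₂ + s := by
      rw [hy2def]; field_simp
    have key : 2 * C₃ * ((C₂ - γ) + (C₃ - C₂) * (2 * y₂) - C₃ * (3 * y₂ ^ 2))
        = -(s * (C₃ - C₂ + s)) := by
      linear_combination (2 * (C₃ - C₂) - (3/2) * (2 * C₃ * y₂ + (C₃ - C₂ + s))) * hy2val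
        - (1/2) * hs2
    nlinarith [key, mul_pos hs0 (by linarith : (0:ℝ) < C₃ - C₂ + s), h2C₃]
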